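/- Let f be a real-valued Schwartz function on ℝ^n with real-valued Fourier transform such that f(x) ≤ 0 for all ‖x‖ ≥ ℓ, 𝔉f(ξ) ≥ 0 for all ξ, and 𝔉f(0) > 0. Then for any full-rank lattice L ⊂ ℝ^n whose shortest nonzero vector has length ≥ ℓ, one has 1/covol(L) ≤ f(0)/𝔉f(0). -/

import Mathlib

open MeasureTheory Real Complex
open scoped FourierTransform RealInnerProductSpace BigOperators

noncomputable section

namespace CohnElkies

variable {n : ℕ}

abbrev Vn (n : ℕ) := EuclideanSpace ℝ (Fin n)

def intVec (k : Fin n → ℤ) : Vn n := WithLp.toLp 2 (fun i => (k i : ℝ))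

@[simp] lemma intVec_apply (k : Fin n → ℤ) (i : Fin n) : intVec k i = (k i : ℝ) := rfl

lemma intVec_add (k l : Fin n → ℤ) : intVec (k + l) = intVec k + intVec l := by
  ext i; simp [intVec]

@[simp] lemma intVec_zero : intVec (0 : Fin n → ℤ) = 0 := by
  ext i; simp [intVec]

lemma intVec_neg (k : Fin n → ℤ) : intVec (-k) = -intVec k := by
  ext i; simp [intVec]

lemma intVec_sub (k l : Fin n → ℤ) : intVec (k - l) = intVec k - intVec l := by
  ext i; simp [intVec]

lemma coord_abs_le_norm (x : Vn n) (i : Fin n) : |x i| ≤ ‖x‖ := by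
  rw [EuclideanSpace.norm_eq]
  have h1 : |x i| = Real.sqrt (‖x i‖ ^ 2) := by
    rw [Real.sqrt_sq_eq_abs]; simp [abs_abs]
  rw [h1]
  apply Real.sqrt_le_sqrt
  exact Finset.single_le_sum (fun j _ => sq_nonneg ‖x j‖) (Finset.mem_univ i)

def wt (j : ℤ) : ℝ := ((1 + |(j : ℝ)|) ^ 2)⁻¹

lemma wt_pos (j : ℤ) : 0 < wt j := by
  apply inv_pos.2; positivity

lemma summable_wt : Summable wt := by
  have h1 : Summable (fun j : ℤ => 1 / (j : ℝ) ^ 2 + if j = 0 then (1 : ℝ) else 0) := by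
    apply Summable.add (summable_one_div_int_pow.2 one_lt_two)
    apply summable_of_ne_finset_zero (s := {0})
    intro b hb
    simp only [Finset.mem_singleton] at hb
    simp [hb]
  apply Summable.of_nonneg_of_le (fun j => (wt_pos j).le) _ h1
  intro j
  by_cases hj : j = 0
  · subst hj; simp [wt]
  · have h2 : (1 : ℝ) ≤ |(j : ℝ)| := by
      rw [← Int.cast_abs]; exact_mod_cast Int.one_le_abs (by simpa using hj)
    have h3 : (j : ℝ) ^ 2 ≤ (1 + |(j : ℝ)|) ^ 2 := by
      nlinarith [abs_nonneg (j : ℝ), _root_.sq_abs (j : ℝ)]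
    have h4 : (0 : ℝ) < (j : ℝ) ^ 2 := by
      have : (j : ℝ) ≠ 0 := Int.cast_ne_zero.2 hj
      positivity
    have h5 : wt j ≤ 1 / (j : ℝ) ^ 2 := by
      rw [wt, one_div]
      exact inv_anti₀ h4 h3
    simp only [hj, if_false, add_zero]
    exact h5

def wtn (k : Fin n → ℤ) : ℝ := ∏ i, wt (k i)

lemma wtn_pos (k : Fin n → ℤ) : 0 < wtn k := Finset.prod_pos fun i _ => wt_pos _

lemma summable_wtn : ∀ n : ℕ, Summable (wtn (n := n))
  | 0 => by
      apply summable_of_ne_finset_zero (s := {(0 : Fin 0 → ℤ)})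
      intro b hb
      exact absurd (by simp [Subsingleton.elim b 0]) hb
  | (n + 1) => by
      have hs : Summable (fun p : ℤ × (Fin n → ℤ) => wt p.1 * wtn p.2) :=
        Summable.mul_of_nonneg summable_wt (summable_wtn n)
          (fun j => (wt_pos j).le) (fun k => (wtn_pos k).le)
      refine ((Fin.consEquiv (fun _ : Fin (n + 1) => ℤ)).summable_iff).1 ?_
      apply hs.congr
      intro p
      show wt p.1 * wtn p.2 = wtn (Fin.cons p.1 p.2)
      simp [wtn, Fin.prod_univ_succ]

/-- Decay bound for Schwartz maps. -/
lemma schwartz_bound (g : SchwartzMap (Vn n) ℂ) (N : ℕ) :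
    ∃ C : ℝ, 0 < C ∧ ∀ y : Vn n, ‖g y‖ * (1 + ‖y‖) ^ N ≤ C := by
  obtain ⟨C, hC⟩ : ∃ C, ∀ y : Vn n, (1 + ‖y‖) ^ N * ‖g y‖ ≤ C := by
    refine ⟨2 ^ N * ((Finset.Iic (N, 0)).sup fun m' => SchwartzMap.seminorm ℝ m'.1 m'.2) g, ?_⟩
    intro y
    have := SchwartzMap.one_add_le_sup_seminorm_apply (𝕜 := ℝ) (m := (N, 0)) le_rfl le_rfl g y
    simpa [norm_iteratedFDeriv_zero] using this
  refine ⟨max C 1, lt_of_lt_of_le one_pos (le_max_right _ _), fun y => ?_⟩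
  rw [mul_comm]
  exact le_trans (hC y) (le_max_left _ _)

/-- Key uniform bound for shifted Schwartz functions over the integer lattice. -/
lemma lattice_bound (g : SchwartzMap (Vn n) ℂ) (r : ℝ) (hr : 0 ≤ r) :
    ∃ C : ℝ, 0 < C ∧ ∀ (k : Fin n → ℤ) (x : Vn n), ‖x‖ ≤ r →
      ‖g (x + intVec k)‖ ≤ C * wtn k := by
  obtain ⟨C₀, hC₀pos, hC₀⟩ := schwartz_bound g (2 * n)
  refine ⟨C₀ * (1 + r) ^ (2 * n), by positivity, fun k x hx => ?_⟩
  set y := x + intVec k with hy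
  have key : ∀ i, (1 + |(k i : ℝ)|) ≤ (1 + r) * (1 + ‖y‖) := by
    intro i
    have h1 : |(k i : ℝ)| ≤ ‖intVec k‖ := by
      have := coord_abs_le_norm (intVec k) i
      simpa using this
    have h2 : ‖intVec k‖ ≤ ‖x‖ + ‖y‖ := by
      have : intVec k = y - x := by rw [hy]; abel
      rw [this]
      exact norm_sub_le_of_le le_rfl le_rfl |>.trans (by rw [add_comm])
    have h3 : (0 : ℝ) ≤ ‖y‖ := norm_nonneg _
    nlinarith
  -- product bound
  have hprod : ∏ i, (1 + |(k i : ℝ)|) ^ 2 ≤ ((1 + r) * (1 + ‖y‖)) ^ (2 * n) := by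
    calc ∏ i, (1 + |(k i : ℝ)|) ^ 2 ≤ ∏ _i : Fin n, ((1 + r) * (1 + ‖y‖)) ^ 2 := by
          apply Finset.prod_le_prod
          · intro i _; positivity
          · intro i _
            exact pow_le_pow_left₀ (by positivity) (key i) 2
      _ = ((1 + r) * (1 + ‖y‖)) ^ (2 * n) := by
          rw [Finset.prod_const, ← pow_mul, Finset.card_univ, Fintype.card_fin, mul_comm 2 n]
  have hwtn : wtn k = (∏ i, (1 + |(k i : ℝ)|) ^ 2)⁻¹ := by
    rw [wtn, ← Finset.prod_inv_distrib]
    rfl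
  have hpos : (0 : ℝ) < (1 + ‖y‖) ^ (2 * n) := by positivity
  have h6 : (0 : ℝ) < ∏ i, (1 + |(k i : ℝ)|) ^ 2 := Finset.prod_pos fun i _ => by positivity
  have h7 : (0 : ℝ) < (1 + r) ^ (2 * n) := by positivity
  have hgy : ‖g y‖ ≤ C₀ * ((1 + ‖y‖) ^ (2 * n))⁻¹ := by
    rw [← div_eq_mul_inv, le_div_iff₀ hpos]
    exact hC₀ y
  refine hgy.trans ?_
  rw [hwtn, mul_assoc]
  apply mul_le_mul_of_nonneg_left _ hC₀pos.le
  rw [mul_pow] at hprod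
  have h8 : (∏ i, (1 + |(k i : ℝ)|) ^ 2) * ((1 + r) ^ (2 * n))⁻¹ ≤ (1 + ‖y‖) ^ (2 * n) := by
    rw [mul_inv_le_iff₀ h7, mul_comm]
    exact hprod
  have h9 := inv_anti₀ (by positivity) h8
  rw [mul_inv, inv_inv] at h9
  rwa [mul_comm ((1 + r) ^ (2 * n))]

lemma summable_norm_shift (g : SchwartzMap (Vn n) ℂ) (x : Vn n) :
    Summable fun k : Fin n → ℤ => ‖g (x + intVec k)‖ := by
  obtain ⟨C, hCpos, hC⟩ := lattice_bound g ‖x‖ (norm_nonneg x)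
  exact Summable.of_nonneg_of_le (fun k => norm_nonneg _) (fun k => hC k x le_rfl)
    ((summable_wtn n).mul_left C)

lemma summable_shift (g : SchwartzMap (Vn n) ℂ) (x : Vn n) :
    Summable fun k : Fin n → ℤ => g (x + intVec k) :=
  (summable_norm_shift g x).of_norm

/-- Periodization of a Schwartz function over the standard integer lattice. -/
def per (g : SchwartzMap (Vn n) ℂ) (x : Vn n) : ℂ := ∑' k : Fin n → ℤ, g (x + intVec k)

lemma per_continuous (g : SchwartzMap (Vn n) ℂ) : Continuous (per g) := by
  rw [continuous_iff_continuousAt]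
  intro x₀
  obtain ⟨C, hCpos, hC⟩ := lattice_bound g (‖x₀‖ + 1) (by positivity)
  have hten : TendstoUniformlyOn
      (fun (s : Finset (Fin n → ℤ)) x => ∑ k ∈ s, g (x + intVec k)) (per g)
      Filter.atTop (Metric.ball 0 (‖x₀‖ + 1)) := by
    apply tendstoUniformlyOn_tsum ((summable_wtn n).mul_left C)
    intro k x hx
    refine hC k x ?_
    have := Metric.mem_ball.1 hx
    rw [dist_zero_right] at this
    linarith
  have hcont : ContinuousOn (per g) (Metric.ball 0 (‖x₀‖ + 1)) := by
    apply hten.continuousOn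
    refine Filter.Eventually.frequently (Filter.Eventually.of_forall ?_)
    intro s
    apply (continuous_finset_sum s fun k _ => ?_).continuousOn
    exact g.continuous.comp (continuous_id.add continuous_const)
  exact hcont.continuousAt (Metric.isOpen_ball.mem_nhds (Metric.mem_ball.2 (by rw [dist_zero_right]; linarith)))

lemma per_periodic (g : SchwartzMap (Vn n) ℂ) (k₀ : Fin n → ℤ) (x : Vn n) :
    per g (x + intVec k₀) = per g x := by
  rw [per, per, ← (Equiv.addLeft k₀).tsum_eq (fun k => g (x + intVec k))]
  apply tsum_congr
  intro k
  have : (Equiv.addLeft k₀) k = k₀ + k := rfl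
  rw [this, intVec_add, add_assoc]

lemma inner_intVec (x : Vn n) (m : Fin n → ℤ) :
    ⟪x, intVec m⟫ = ∑ i, x i * (m i : ℝ) := by
  rw [PiLp.inner_apply]
  apply Finset.sum_congr rfl
  intro i _
  simp [RCLike.inner_apply, intVec, mul_comm]

lemma inner_intVec_intVec (k m : Fin n → ℤ) :
    ⟪intVec k, intVec m⟫ = ((∑ i, k i * m i : ℤ) : ℝ) := by
  rw [inner_intVec]
  push_cast
  rfl

/-- The complex exponential character. -/
def charF (m : Fin n → ℤ) (x : Vn n) : ℂ :=
  Complex.exp (2 * π * Complex.I * ((⟪x, intVec m⟫ : ℝ) : ℂ))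

lemma norm_char (t : ℝ) : ‖Complex.exp (2 * π * Complex.I * (t : ℂ))‖ = 1 := by
  have h : (2 * π * Complex.I * (t : ℂ)) = ((2 * π * t : ℝ) : ℂ) * Complex.I := by
    push_cast; ring
  rw [h, Complex.norm_exp_ofReal_mul_I]

lemma norm_charF (m : Fin n → ℤ) (x : Vn n) : ‖charF m x‖ = 1 := norm_char _

lemma charF_continuous (m : Fin n → ℤ) : Continuous (charF m) := by
  apply Complex.continuous_exp.comp
  apply Continuous.mul continuous_const
  exact Complex.continuous_ofReal.comp (Continuous.inner continuous_id continuous_const)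

lemma char_int (c : ℤ) : Complex.exp (2 * π * Complex.I * ((c : ℝ) : ℂ)) = 1 := by
  have := Complex.exp_int_mul_two_pi_mul_I c
  rw [← this]
  congr 1
  push_cast
  ring

lemma charF_add_intVec (m k : Fin n → ℤ) (x : Vn n) :
    charF m (x + intVec k) = charF m x := by
  rw [charF, charF, inner_add_left, inner_intVec_intVec]
  push_cast
  rw [mul_add, Complex.exp_add]
  have := char_int (∑ i, k i * m i)
  push_cast at this
  rw [this, mul_one]

lemma summable_norm_F (g : SchwartzMap (Vn n) ℂ) :
    Summable fun m : Fin n → ℤ => ‖𝓕 ⇑g (intVec m)‖ := by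
  have h := summable_norm_shift (FourierTransform.fourierCLE ℝ (SchwartzMap (Vn n) ℂ) g) 0
  simpa [FourierTransform.fourierCLE_apply, SchwartzMap.fourier_coe] using h

lemma summable_F (g : SchwartzMap (Vn n) ℂ) :
    Summable fun m : Fin n → ℤ => 𝓕 ⇑g (intVec m) :=
  (summable_norm_F g).of_norm

/-- The Fourier series side. -/
def Qf (g : SchwartzMap (Vn n) ℂ) (x : Vn n) : ℂ :=
  ∑' m : Fin n → ℤ, 𝓕 ⇑g (intVec m) * charF m x

lemma Qf_term_norm (g : SchwartzMap (Vn n) ℂ) (m : Fin n → ℤ) (x : Vn n) :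
    ‖𝓕 ⇑g (intVec m) * charF m x‖ = ‖𝓕 ⇑g (intVec m)‖ := by
  rw [norm_mul, norm_charF, mul_one]

lemma Qf_continuous (g : SchwartzMap (Vn n) ℂ) : Continuous (Qf g) := by
  apply continuous_tsum (fun m => (continuous_const.mul (charF_continuous m)))
    (summable_norm_F g)
  intro m x
  exact le_of_eq (Qf_term_norm g m x)

lemma Qf_periodic (g : SchwartzMap (Vn n) ℂ) (k₀ : Fin n → ℤ) (x : Vn n) :
    Qf g (x + intVec k₀) = Qf g x := by
  apply tsum_congr
  intro m
  rw [charF_add_intVec]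

lemma summable_shift_mul_char (g : SchwartzMap (Vn n) ℂ) (m : Fin n → ℤ) (x : Vn n) :
    Summable fun k : Fin n → ℤ => g (x + intVec k) * (starRingEnd ℂ) (charF m x) :=
  (summable_shift g x).mul_right _

section FundDomain

variable (n)

/-- The standard basis of Euclidean space, as a basis. -/
def bstd : Module.Basis (Fin n) ℝ (Vn n) := (EuclideanSpace.basisFun (Fin n) ℝ).toBasis

lemma bstd_repr (x : Vn n) (i : Fin n) : (bstd n).repr x i = x i := by
  rw [bstd, OrthonormalBasis.coe_toBasis_repr_apply, EuclideanSpace.basisFun_repr]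

/-- The standard fundamental domain: the unit cube. -/
def Dstd : Set (Vn n) := ZSpan.fundamentalDomain (bstd n)

lemma mem_Dstd (x : Vn n) : x ∈ Dstd n ↔ ∀ i, x i ∈ Set.Ico (0 : ℝ) 1 := by
  rw [Dstd, ZSpan.mem_fundamentalDomain]
  constructor <;> intro h i <;> have := h i <;> rwa [bstd_repr] at * <;> exact this

/-- The standard lattice as an `AddSubgroup`. -/
def Λstd : AddSubgroup (Vn n) := (Submodule.span ℤ (Set.range ⇑(bstd n))).toAddSubgroup

variable {n}

lemma intVec_eq_sum (k : Fin n → ℤ) : intVec k = ∑ i, k i • (bstd n) i := by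
  ext j
  rw [bstd]
  have h1 : ∀ i : Fin n, ((EuclideanSpace.basisFun (Fin n) ℝ).toBasis : Fin n → Vn n) i
      = EuclideanSpace.single i (1 : ℝ) := by
    intro i
    rw [OrthonormalBasis.coe_toBasis, EuclideanSpace.basisFun_apply]
  simp only [h1]
  rw [WithLp.ofLp_sum, Finset.sum_apply]
  · rw [Finset.sum_eq_single j]
    · simp [EuclideanSpace.single_apply]
    · intro i _ hij
      have : (EuclideanSpace.single i (1:ℝ)) j = 0 := by
        rw [EuclideanSpace.single_apply, if_neg (Ne.symm hij)]
      show (k i • EuclideanSpace.single i (1:ℝ)) j = 0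
      have h2 : (k i • EuclideanSpace.single i (1:ℝ)) j = k i • (EuclideanSpace.single i (1:ℝ) j) := rfl
      rw [h2, this, smul_zero]
    · intro h; exact absurd (Finset.mem_univ j) h

lemma intVec_mem_span (k : Fin n → ℤ) :
    intVec k ∈ Submodule.span ℤ (Set.range ⇑(bstd n)) := by
  rw [intVec_eq_sum]
  exact Submodule.sum_mem _ fun i _ =>
    Submodule.smul_mem _ _ (Submodule.subset_span (Set.mem_range_self i))

lemma span_to_intVec {y : Vn n} (hy : y ∈ Submodule.span ℤ (Set.range ⇑(bstd n))) :
    ∃ k : Fin n → ℤ, intVec k = y := by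
  rw [Module.Basis.mem_span_iff_repr_mem] at hy
  choose k hk using hy
  refine ⟨k, PiLp.ext fun j => ?_⟩
  have := hk j
  rw [intVec_apply]
  rw [← bstd_repr n y j, ← this]
  rfl

/-- The identification of `ℤⁿ` with the standard lattice. -/
def eΛ : (Fin n → ℤ) ≃ (Λstd n) := by
  refine Equiv.ofBijective
    (fun k => ⟨intVec k, Submodule.mem_toAddSubgroup _ |>.2 (intVec_mem_span k)⟩) ⟨?_, ?_⟩
  · intro k l hkl
    funext i
    have : intVec k = intVec l := congrArg Subtype.val hkl
    have h2 := congrArg (fun v : Vn n => v i) this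
    simp only [intVec_apply] at h2
    exact_mod_cast h2
  · rintro ⟨y, hy⟩
    obtain ⟨k, hk⟩ := span_to_intVec (Submodule.mem_toAddSubgroup _ |>.1 hy)
    exact ⟨k, Subtype.ext hk⟩

instance : Countable (Λstd n) := Countable.of_equiv _ eΛ

@[simp] lemma eΛ_val (k : Fin n → ℤ) : ((eΛ k : Λstd n) : Vn n) = intVec k := rfl

variable (n)

lemma fund : IsAddFundamentalDomain (Λstd n) (Dstd n) volume :=
  ZSpan.isAddFundamentalDomain' (bstd n) volume

lemma Dstd_bounded : Bornology.IsBounded (Dstd n) := ZSpan.fundamentalDomain_isBounded (bstd n)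

lemma Dstd_measurableSet : MeasurableSet (Dstd n) := ZSpan.fundamentalDomain_measurableSet (bstd n)

lemma vol_Dstd : volume (Dstd n) = 1 := by
  have h1 : Dstd n = ((MeasurableEquiv.toLp 2 (Fin n → ℝ)).symm) ⁻¹'
      (Set.univ.pi fun _ : Fin n => Set.Ico (0 : ℝ) 1) := by
    ext x
    rw [mem_Dstd]
    simp only [Set.mem_preimage, Set.mem_pi, Set.mem_univ, forall_true_left]
    rfl
  rw [h1, (EuclideanSpace.volume_preserving_symm_measurableEquiv_toLp (Fin n)).measure_preimage
    (MeasurableSet.univ_pi fun _ => measurableSet_Ico).nullMeasurableSet]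
  rw [volume_pi_pi]
  simp

variable {n}

lemma unfold_integral (F : Vn n → ℂ) (hF : Integrable F) :
    ∫ x, F x = ∑' k : Fin n → ℤ, ∫ x in Dstd n, F (x + intVec k) := by
  rw [(fund n).integral_eq_tsum' F hF]
  rw [← ((Equiv.neg (Fin n → ℤ)).trans eΛ).tsum_eq
    (fun γ : Λstd n => ∫ x in Dstd n, F (-γ +ᵥ x))]
  apply tsum_congr
  intro k
  apply setIntegral_congr_fun (Dstd_measurableSet n)
  intro x _
  show F (-((((Equiv.neg (Fin n → ℤ)).trans eΛ) k) : Λstd n) +ᵥ x) = F (x + intVec k)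
  have h1 : -((((Equiv.neg (Fin n → ℤ)).trans eΛ) k) : Λstd n) +ᵥ x = x + intVec k := by
    show -(((eΛ (-k) : Λstd n)) : Vn n) + x = x + intVec k
    rw [eΛ_val, intVec_neg, neg_neg, add_comm]
  rw [h1]

lemma unfold_lintegral (F : Vn n → ℂ) :
    ∫⁻ x, ‖F x‖₊ = ∑' k : Fin n → ℤ, ∫⁻ x in Dstd n, ‖F (x + intVec k)‖₊ := by
  rw [(fund n).lintegral_eq_tsum' (fun x => ‖F x‖₊)]
  rw [← ((Equiv.neg (Fin n → ℤ)).trans eΛ).tsum_eq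
    (fun γ : Λstd n => ∫⁻ x in Dstd n, ‖F (-γ +ᵥ x)‖₊)]
  apply tsum_congr
  intro k
  apply lintegral_congr
  intro x
  have h1 : -((((Equiv.neg (Fin n → ℤ)).trans eΛ) k) : Λstd n) +ᵥ x = x + intVec k := by
    show -(((eΛ (-k) : Λstd n)) : Vn n) + x = x + intVec k
    rw [eΛ_val, intVec_neg, neg_neg, add_comm]
  rw [h1]

lemma integrableOn_of_continuous {F : Vn n → ℂ} (hF : Continuous F) {s : Set (Vn n)}
    (hs : Bornology.IsBounded s) : IntegrableOn F s := by
  have hc : IsCompact (closure s) :=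
    Metric.isCompact_of_isClosed_isBounded isClosed_closure hs.closure
  exact (hF.continuousOn.integrableOn_compact hc).mono_set subset_closure

end FundDomain

section Coefficients

lemma ecoe (t : ℝ) : ((𝐞 t : Circle) : ℂ) = Complex.exp (2 * π * Complex.I * (t : ℂ)) := by
  rw [Real.fourierChar_apply]
  push_cast
  ring_nf

lemma nnnorm_ecoe (t : ℝ) : ‖((𝐞 t : Circle) : ℂ)‖₊ = 1 := by
  have h : ‖((𝐞 t : Circle) : ℂ)‖ = 1 := by rw [ecoe]; exact norm_char t
  ext
  rw [coe_nnnorm, h]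
  rfl

lemma contE (m : Fin n → ℤ) :
    Continuous fun x : Vn n => ((𝐞 (-(⟪x, intVec m⟫)) : Circle) : ℂ) := by
  have h : (fun x : Vn n => ((𝐞 (-(⟪x, intVec m⟫)) : Circle) : ℂ))
      = fun x : Vn n => Complex.exp (2 * π * Complex.I * ((-(⟪x, intVec m⟫) : ℝ) : ℂ)) := by
    funext x; rw [ecoe]
  rw [h]
  apply Complex.continuous_exp.comp
  apply Continuous.mul continuous_const
  exact Complex.continuous_ofReal.comp
    ((Continuous.inner continuous_id continuous_const).neg)

lemma e_add_intVec (m k : Fin n → ℤ) (x : Vn n) :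
    ((𝐞 (-(⟪x + intVec k, intVec m⟫)) : Circle) : ℂ) = ((𝐞 (-(⟪x, intVec m⟫)) : Circle) : ℂ) := by
  rw [ecoe, ecoe, inner_add_left, inner_intVec_intVec]
  rw [show -((⟪x, intVec m⟫ : ℝ) + ((∑ i, k i * m i : ℤ) : ℝ))
      = -(⟪x, intVec m⟫ : ℝ) + ((-∑ i, k i * m i : ℤ) : ℝ) by push_cast; ring]
  push_cast
  rw [mul_add, Complex.exp_add]
  have h := char_int (-∑ i, k i * m i)
  push_cast at h
  rw [h, mul_one]

lemma char_mul (m m' : Fin n → ℤ) (x : Vn n) :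
    ((𝐞 (-(⟪x, intVec m⟫)) : Circle) : ℂ) * charF m' x = charF (m' - m) x := by
  rw [ecoe, charF, charF, ← Complex.exp_add, intVec_sub, inner_sub_right]
  congr 1
  push_cast
  ring

/-- Fourier coefficients of the periodization. -/
lemma coeff_per (g : SchwartzMap (Vn n) ℂ) (m : Fin n → ℤ) :
    ∫ x in Dstd n, ((𝐞 (-(⟪x, intVec m⟫)) : Circle) : ℂ) * per g x = 𝓕 ⇑g (intVec m) := by
  set F : Vn n → ℂ := fun y => ((𝐞 (-(⟪y, intVec m⟫)) : Circle) : ℂ) * g y with hFdef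
  have hFcont : Continuous F := (contE m).mul g.continuous
  have hFint : Integrable F := by
    apply Integrable.mono' g.integrable.norm hFcont.aestronglyMeasurable
    apply Filter.Eventually.of_forall
    intro x
    rw [hFdef]
    simp only
    rw [norm_mul]
    rw [show ‖((𝐞 (-(⟪x, intVec m⟫)) : Circle) : ℂ)‖ = 1 from by
      have := nnnorm_ecoe (-(⟪x, intVec m⟫ : ℝ)); rw [← coe_nnnorm, this]; rfl]
    rw [one_mul]
  -- step 1: move the character into the sum and swap
  have h1 : ∀ x : Vn n, ((𝐞 (-(⟪x, intVec m⟫)) : Circle) : ℂ) * per g x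
      = ∑' k : Fin n → ℤ, F (x + intVec k) := by
    intro x
    rw [per, ← tsum_mul_left]
    apply tsum_congr
    intro k
    rw [hFdef]
    simp only
    rw [e_add_intVec]
  rw [setIntegral_congr_fun (Dstd_measurableSet n) (fun x _ => h1 x)]
  -- step 2: swap integral and sum
  rw [MeasureTheory.integral_tsum]
  · -- step 3: recombine into the full integral
    rw [← unfold_integral F hFint]
    rw [Real.fourier_eq]
    apply integral_congr_ae
    apply Filter.Eventually.of_forall
    intro v
    rw [hFdef]
    simp only
    rw [Circle.smul_def, smul_eq_mul]
  · intro k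
    exact (hFcont.comp (continuous_id.add continuous_const)).aestronglyMeasurable
  · simp only [enorm_eq_nnnorm]
    rw [← unfold_lintegral F]
    exact hFint.2.ne

lemma integral_charF_zero : ∫ x in Dstd n, charF (0 : Fin n → ℤ) x = 1 := by
  have h : ∀ x : Vn n, charF (0 : Fin n → ℤ) x = 1 := by
    intro x
    rw [charF, intVec_zero, inner_zero_right]
    simp
  rw [setIntegral_congr_fun (Dstd_measurableSet n) (fun x _ => h x)]
  rw [setIntegral_const, measureReal_def, vol_Dstd]
  simp

lemma integral_charF_ne (m : Fin n → ℤ) (hm : m ≠ 0) : ∫ x in Dstd n, charF m x = 0 := by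
  obtain ⟨i, hi⟩ : ∃ i, m i ≠ 0 := by
    by_contra h
    push_neg at h
    exact hm (funext h)
  set v : Vn n := (1 / (2 * (m i : ℝ))) • EuclideanSpace.single i (1 : ℝ) with hvdef
  have hmiR : (m i : ℝ) ≠ 0 := Int.cast_ne_zero.2 hi
  have hv : (⟪v, intVec m⟫ : ℝ) = 1 / 2 := by
    rw [hvdef, real_inner_smul_left, inner_intVec]
    rw [Finset.sum_eq_single i]
    · rw [EuclideanSpace.single_apply, if_pos rfl, one_mul]
      field_simp
    · intro j _ hj
      rw [EuclideanSpace.single_apply, if_neg hj, zero_mul]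
    · intro h; exact absurd (Finset.mem_univ i) h
  -- the translated fundamental domain
  have fund2 : IsAddFundamentalDomain (Λstd n) ((fun x => v + x) '' Dstd n) volume := by
    apply (fund n).image_of_equiv (Equiv.addLeft v) _ (Equiv.refl _)
    · intro γ x
      show v + (↑γ + x) = ↑((Equiv.refl (Λstd n)) γ) + (v + x)
      simp only [Equiv.refl_apply]
      abel
    · rw [Equiv.addLeft_symm, Equiv.coe_addLeft]
      exact (measurePreserving_add_left volume (-v)).quasiMeasurePreserving
  have hperiod : ∀ (γ : Λstd n) (x : Vn n), charF m (γ +ᵥ x) = charF m x := by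
    intro γ x
    obtain ⟨k, hk⟩ := eΛ.surjective γ
    have h3 : γ +ᵥ x = x + intVec k := by
      show (γ : Vn n) + x = x + intVec k
      rw [← hk, eΛ_val, add_comm]
    rw [h3, charF_add_intVec]
  have heq := (fund n).setIntegral_eq fund2 hperiod
  have himg : ∫ x in (fun x => v + x) '' Dstd n, charF m x
      = ∫ x in Dstd n, charF m (v + x) := by
    have hset : (fun x => v + x) '' Dstd n = (fun x => -v + x) ⁻¹' Dstd n := by
      ext y
      constructor
      · rintro ⟨x, hx, rfl⟩
        show -v + (v + x) ∈ Dstd n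
        rwa [neg_add_cancel_left]
      · intro hy
        exact ⟨-v + y, hy, by show v + (-v + y) = y; rw [add_neg_cancel_left]⟩
    rw [hset]
    have h4 := (measurePreserving_add_left volume (-v)).setIntegral_preimage_emb
      (measurableEmbedding_addLeft (-v)) (fun y => charF m (v + y)) (Dstd n)
    rw [← h4]
    apply setIntegral_congr_fun ((measurable_const_add (-v)) (Dstd_measurableSet n))
    intro x _
    show charF m x = charF m (v + (-v + x))
    rw [add_neg_cancel_left]
  have hneg : ∀ x : Vn n, charF m (v + x) = -charF m x := by
    intro x
    rw [charF, charF, inner_add_left, hv]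
    rw [show ((2 : ℂ) * π * Complex.I * ((1 / 2 + (⟪x, intVec m⟫ : ℝ) : ℝ) : ℂ))
        = π * Complex.I + 2 * π * Complex.I * ((⟪x, intVec m⟫ : ℝ) : ℂ) by push_cast; ring]
    rw [Complex.exp_add, Complex.exp_pi_mul_I]
    ring
  have h5 : ∫ x in Dstd n, charF m (v + x) = -∫ x in Dstd n, charF m x := by
    rw [← MeasureTheory.integral_neg]
    exact setIntegral_congr_fun (Dstd_measurableSet n) (fun x _ => hneg x)
  have h6 : ∫ x in Dstd n, charF m x = -∫ x in Dstd n, charF m x := by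
    calc ∫ x in Dstd n, charF m x = ∫ x in (fun x => v + x) '' Dstd n, charF m x := heq
      _ = ∫ x in Dstd n, charF m (v + x) := himg
      _ = -∫ x in Dstd n, charF m x := h5
  have h7 : (∫ x in Dstd n, charF m x) + ∫ x in Dstd n, charF m x = 0 := by
    nth_rewrite 1 [h6]
    ring
  exact add_self_eq_zero.1 h7

/-- Fourier coefficients of the dual series. -/
lemma coeff_Qf (g : SchwartzMap (Vn n) ℂ) (m : Fin n → ℤ) :
    ∫ x in Dstd n, ((𝐞 (-(⟪x, intVec m⟫)) : Circle) : ℂ) * Qf g x = 𝓕 ⇑g (intVec m) := by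
  have h1 : ∀ x : Vn n, ((𝐞 (-(⟪x, intVec m⟫)) : Circle) : ℂ) * Qf g x
      = ∑' m' : Fin n → ℤ, 𝓕 ⇑g (intVec m') * charF (m' - m) x := by
    intro x
    rw [Qf, ← tsum_mul_left]
    apply tsum_congr
    intro m'
    rw [← char_mul m m' x]
    ring
  rw [setIntegral_congr_fun (Dstd_measurableSet n) (fun x _ => h1 x)]
  rw [MeasureTheory.integral_tsum]
  · have h2 : ∀ m' : Fin n → ℤ,
        ∫ x in Dstd n, 𝓕 ⇑g (intVec m') * charF (m' - m) x
        = if m' = m then 𝓕 ⇑g (intVec m) else 0 := by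
      intro m'
      rw [MeasureTheory.integral_const_mul]
      by_cases hm' : m' = m
      · subst hm'
        rw [if_pos rfl, sub_self, integral_charF_zero, mul_one]
      · rw [if_neg hm', integral_charF_ne (m' - m) (sub_ne_zero.2 hm'), mul_zero]
    rw [tsum_congr h2]
    rw [tsum_eq_single m]
    · rw [if_pos rfl]
    · intro m' hm'
      rw [if_neg hm']
  · intro m'
    exact (continuous_const.mul (charF_continuous (m' - m))).aestronglyMeasurable
  · have h3 : ∀ m' : Fin n → ℤ,
        ∫⁻ x in Dstd n, ‖𝓕 ⇑g (intVec m') * charF (m' - m) x‖₊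
        = (‖𝓕 ⇑g (intVec m')‖₊ : ENNReal) := by
      intro m'
      have h4 : ∀ x : Vn n, (‖𝓕 ⇑g (intVec m') * charF (m' - m) x‖₊ : ENNReal)
          = (‖𝓕 ⇑g (intVec m')‖₊ : ENNReal) := by
        intro x
        congr 1
        rw [nnnorm_mul]
        have h5 : ‖charF (m' - m) x‖₊ = 1 := by
          ext
          rw [coe_nnnorm, norm_charF]
          rfl
        rw [h5, mul_one]
      rw [lintegral_congr h4, setLIntegral_const, vol_Dstd, mul_one]
    simp only [enorm_eq_nnnorm]
    rw [tsum_congr h3]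
    exact ENNReal.tsum_coe_ne_top_iff_summable.2 (NNReal.summable_coe.1 (by
      have := summable_norm_F g
      simpa [coe_nnnorm] using this))

end Coefficients

section OneD

/-- 1-D uniqueness: a continuous 1-periodic function with vanishing Fourier
coefficients is identically zero. -/
lemma oneD {g : ℝ → ℂ} (hc : Continuous g) (hp : Function.Periodic g 1)
    (h0 : ∀ m : ℤ, ∫ t in (0:ℝ)..1, g t * Complex.exp (-(2 * π * Complex.I * m * t)) = 0) :
    ∀ t, g t = 0 := by
  haveI : Fact ((0:ℝ) < 1) := ⟨one_pos⟩
  set G : AddCircle (1:ℝ) → ℂ := AddCircle.liftIco 1 0 g with hGdef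
  have hg01 : g 0 = g (0 + 1) := by rw [zero_add, ← hp 0, zero_add]
  have hGcont : Continuous G := AddCircle.liftIco_continuous hg01 hc.continuousOn
  have hGcoe : ∀ t : ℝ, t ∈ Set.Ico (0:ℝ) 1 → G ↑t = g t := by
    intro t ht
    exact AddCircle.liftIco_coe_apply (by rwa [zero_add])
  have hcoeff : ∀ m : ℤ, fourierCoeff G m = 0 := by
    intro m
    rw [fourierCoeff_eq_intervalIntegral G m 0]
    have heq : ∫ x in (0:ℝ)..(0+1), (fourier (-m)) (↑x : AddCircle (1:ℝ)) • G ↑x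
        = ∫ t in (0:ℝ)..1, g t * Complex.exp (-(2 * π * Complex.I * m * t)) := by
      rw [zero_add]
      apply intervalIntegral.integral_congr_ae
      filter_upwards [compl_mem_ae_iff.2 (measure_singleton (1:ℝ))] with t ht htmem
      rw [Set.uIoc_of_le zero_le_one] at htmem
      have htIco : t ∈ Set.Ico (0:ℝ) 1 := ⟨htmem.1.le, lt_of_le_of_ne htmem.2 ht⟩
      rw [hGcoe t htIco, smul_eq_mul, mul_comm]
      congr 1
      rw [fourier_coe_apply]
      congr 1
      push_cast
      ring
    rw [heq, h0 m]
    simp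
  have hG0 : G = 0 := by
    set Gc : C(AddCircle (1:ℝ), ℂ) := ⟨G, hGcont⟩ with hGcdef
    set GLp := ContinuousMap.toLp (E := ℂ) 2 AddCircle.haarAddCircle ℂ Gc with hGLpdef
    have hrepr : fourierBasis.repr GLp = 0 := by
      apply lp.ext
      funext i
      have h1 := fourierBasis_repr GLp i
      have h2 : fourierCoeff (↑↑GLp : AddCircle (1:ℝ) → ℂ) i = fourierCoeff G i := by
        rw [fourierCoeff, fourierCoeff]
        apply integral_congr_ae
        filter_upwards [ContinuousMap.coeFn_toLp (p := 2) AddCircle.haarAddCircle (𝕜 := ℂ) Gc] with x hx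
        rw [hx]
        rfl
      rw [h1, h2, hcoeff i]
      rfl
    have hGLp0 : GLp = 0 := by
      rwa [LinearIsometryEquiv.map_eq_zero_iff] at hrepr
    have hae : G =ᶠ[ae AddCircle.haarAddCircle] 0 := by
      have h3 := (ContinuousMap.coeFn_toLp (p := 2) AddCircle.haarAddCircle (𝕜 := ℂ) Gc).symm
      rw [← hGLpdef, hGLp0] at h3
      exact h3.trans (MeasureTheory.Lp.coeFn_zero ℂ 2 AddCircle.haarAddCircle)
    exact (Continuous.ae_eq_iff_eq AddCircle.haarAddCircle hGcont continuous_const).1 hae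
  intro t
  have h4 : g t = g (Int.fract t) := by
    have h5 := hp.sub_int_mul_eq (x := t) ⌊t⌋
    rw [mul_one] at h5
    rw [Int.fract]
    exact h5.symm
  rw [h4, ← hGcoe (Int.fract t) ⟨Int.fract_nonneg t, Int.fract_lt_one t⟩, hG0]
  rfl

end OneD

section MultiD

/-- The half-open unit cube in `Fin n → ℝ`. -/
def cube (n : ℕ) : Set (Fin n → ℝ) := Set.univ.pi fun _ => Set.Ico (0:ℝ) 1

lemma cube_subset_Icc (n : ℕ) : cube n ⊆ Set.univ.pi fun _ => Set.Icc (0:ℝ) 1 :=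
  Set.pi_mono fun i _ => Set.Ico_subset_Icc_self

lemma isCompact_Icc_cube (n : ℕ) : IsCompact (Set.univ.pi fun _ : Fin n => Set.Icc (0:ℝ) 1) :=
  isCompact_univ_pi fun _ => isCompact_Icc

lemma bounded_of_periodic {n : ℕ} {h : (Fin n → ℝ) → ℂ} (hc : Continuous h)
    (hper : ∀ (x : Fin n → ℝ) (k : Fin n → ℤ), h (x + fun i => (k i : ℝ)) = h x) :
    ∃ C : ℝ, ∀ x, ‖h x‖ ≤ C := by
  obtain ⟨C, hC⟩ := (isCompact_Icc_cube n).exists_bound_of_continuousOn hc.continuousOn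
  refine ⟨C, fun x => ?_⟩
  have h1 : h x = h (x + fun i => ((-⌊x i⌋ : ℤ) : ℝ)) := (hper x _).symm
  rw [h1]
  apply hC
  intro i _
  have h2 : (x + fun i => ((-⌊x i⌋ : ℤ) : ℝ)) i = Int.fract (x i) := by
    show x i + ((-⌊x i⌋ : ℤ) : ℝ) = Int.fract (x i)
    rw [Int.fract]
    push_cast
    ring
  rw [h2]
  exact ⟨Int.fract_nonneg _, (Int.fract_lt_one _).le⟩

lemma continuous_cons {n : ℕ} :
    Continuous fun p : ℝ × (Fin n → ℝ) => (Fin.cons p.1 p.2 : Fin (n+1) → ℝ) := by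
  apply continuous_pi
  intro j
  refine Fin.cases ?_ ?_ j
  · simpa using continuous_fst
  · intro j'
    have hc : Continuous fun p : ℝ × (Fin n → ℝ) => p.2 j' := (continuous_apply j').comp continuous_snd
    simpa [Fin.cons_succ] using hc

lemma cons_add_vec {n : ℕ} (t : ℝ) (y : Fin n → ℝ) (k : Fin n → ℤ) :
    (Fin.cons t y : Fin (n+1) → ℝ) + (fun i => ((Fin.cons (0:ℤ) k : Fin (n+1) → ℤ) i : ℝ))
      = Fin.cons t (y + fun j => (k j : ℝ)) := by
  funext j
  refine Fin.cases ?_ ?_ j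
  · show (Fin.cons t y : Fin (n+1) → ℝ) 0 + _ = _
    simp
  · intro j'
    show (Fin.cons t y : Fin (n+1) → ℝ) j'.succ + _ = _
    simp [Fin.cons_succ]

lemma cons_one_shift {n : ℕ} (t : ℝ) (y : Fin n → ℝ) :
    (Fin.cons t y : Fin (n+1) → ℝ) + (fun i => ((Fin.cons (1:ℤ) (0 : Fin n → ℤ) : Fin (n+1) → ℤ) i : ℝ))
      = Fin.cons (t + 1) y := by
  funext j
  refine Fin.cases ?_ ?_ j
  · show (Fin.cons t y : Fin (n+1) → ℝ) 0 + _ = _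
    simp
  · intro j'
    show (Fin.cons t y : Fin (n+1) → ℝ) j'.succ + _ = _
    simp [Fin.cons_succ]

lemma insertNth_zero_cons {n : ℕ} (t : ℝ) (y : Fin n → ℝ) :
    (Fin.insertNth 0 t y : Fin (n+1) → ℝ) = Fin.cons t y := by
  funext j
  refine Fin.cases ?_ ?_ j
  · simp
  · intro j'
    have h1 : (0 : Fin (n+1)).succAbove j' = j'.succ := by
      rw [Fin.succAbove_zero]
    rw [← h1, Fin.insertNth_apply_succAbove, h1, Fin.cons_succ]

lemma cont_exp_lin (c : ℂ) : Continuous fun t : ℝ => Complex.exp (-(c * (t:ℂ))) :=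
  Complex.continuous_exp.comp ((continuous_const.mul Complex.continuous_ofReal).neg)

lemma norm_exp_coeff (a : ℤ) (t : ℝ) :
    ‖Complex.exp (-(2 * π * Complex.I * (a:ℂ) * (t:ℂ)))‖ = 1 := by
  rw [show -(2 * π * Complex.I * (a:ℂ) * (t:ℂ))
      = 2 * π * Complex.I * (((-(a * t) : ℝ)) : ℂ) by push_cast; ring]
  rw [show (2 : ℂ) * π * Complex.I * (((-((a:ℝ) * t) : ℝ)) : ℂ)
      = 2 * π * Complex.I * (((-((a:ℝ) * t) : ℝ)) : ℂ) from rfl]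
  exact norm_char _

/-- Multidimensional uniqueness by induction on the dimension. -/
lemma multiD : ∀ (n : ℕ) (h : (Fin n → ℝ) → ℂ), Continuous h →
    (∀ (x : Fin n → ℝ) (k : Fin n → ℤ), h (x + fun i => (k i : ℝ)) = h x) →
    (∀ m : Fin n → ℤ, ∫ x in cube n,
      h x * Complex.exp (-(2 * π * Complex.I * ∑ i, (m i : ℂ) * (x i : ℂ))) = 0) →
    ∀ x, h x = 0 := by
  intro n
  induction n with
  | zero =>
      intro h hc hper h0
      intro x
      have h1 := h0 0
      have hcube : cube 0 = Set.univ := Set.eq_univ_of_forall fun y i _ => (Fin.elim0 i : _)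
      rw [hcube] at h1
      have h2 : ∀ y : Fin 0 → ℝ,
          h y * Complex.exp (-(2 * π * Complex.I * ∑ i : Fin 0, ((0 : Fin 0 → ℤ) i : ℂ) * (y i : ℂ)))
          = h x := by
        intro y
        rw [Finset.univ_eq_empty, Finset.sum_empty, mul_zero, neg_zero, Complex.exp_zero, mul_one]
        exact congrArg h (Subsingleton.elim _ _)
      rw [integral_congr_ae (Filter.Eventually.of_forall h2)] at h1
      rw [integral_const] at h1
      have h3 : (volume : Measure (Fin 0 → ℝ)) Set.univ = 1 := by
        have := volume_pi_pi (fun _ : Fin 0 => Set.univ (α := ℝ))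
        simpa using this
      rw [measureReal_def, Measure.restrict_apply_univ, h3] at h1
      simpa using h1
  | succ n IH =>
      intro h hc hper h0
      set Hm : ℤ → (Fin n → ℝ) → ℂ := fun m₀ y =>
        ∫ t in Set.Ico (0:ℝ) 1, h (Fin.cons t y) * Complex.exp (-(2 * π * Complex.I * (m₀:ℂ) * (t:ℂ)))
        with hHmdef
      obtain ⟨C, hC⟩ := bounded_of_periodic hc hper
      have hIcoFin : (volume : Measure ℝ) (Set.Ico (0:ℝ) 1) < ⊤ := by
        rw [Real.volume_Ico]
        exact ENNReal.ofReal_lt_top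
      -- continuity of Hm m₀
      have hHmc : ∀ m₀ : ℤ, Continuous (Hm m₀) := by
        intro m₀
        apply continuous_of_dominated (bound := fun _ => C)
        · intro y
          apply Continuous.aestronglyMeasurable
          exact ((hc.comp (continuous_cons.comp
            (continuous_id.prodMk continuous_const))).mul (cont_exp_lin _))
        · intro y
          apply Filter.Eventually.of_forall
          intro t
          rw [norm_mul, norm_exp_coeff, mul_one]
          exact hC _
        · exact integrableOn_const hIcoFin.ne
        · apply Filter.Eventually.of_forall
          intro t
          exact ((hc.comp (continuous_cons.comp
            (continuous_const.prodMk continuous_id))).mul continuous_const)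
      -- periodicity of Hm m₀
      have hHmper : ∀ (m₀ : ℤ) (y : Fin n → ℝ) (k : Fin n → ℤ),
          Hm m₀ (y + fun j => (k j : ℝ)) = Hm m₀ y := by
        intro m₀ y k
        rw [hHmdef]
        simp only
        apply setIntegral_congr_fun measurableSet_Ico
        intro t _
        have hx := hper (Fin.cons t y) (Fin.cons 0 k)
        rw [cons_add_vec] at hx
        show h (Fin.cons t (y + fun j => ((k j : ℤ) : ℝ)))
            * Complex.exp (-(2 * π * Complex.I * (m₀:ℂ) * (t:ℂ)))
          = h (Fin.cons t y) * Complex.exp (-(2 * π * Complex.I * (m₀:ℂ) * (t:ℂ)))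
        rw [hx]
      -- the Fubini computation: the coefficients of Hm m₀ all vanish
      have hcoeffH : ∀ (m₀ : ℤ) (m : Fin n → ℤ),
          ∫ y in cube n, Hm m₀ y
            * Complex.exp (-(2 * π * Complex.I * ∑ i, (m i : ℂ) * (y i : ℂ))) = 0 := by
        intro m₀ m
        set FF : (Fin (n+1) → ℝ) → ℂ := fun x =>
          h x * Complex.exp (-(2 * π * Complex.I
            * ∑ i, ((Fin.cons m₀ m : Fin (n+1) → ℤ) i : ℂ) * (x i : ℂ))) with hFFdef
        have hFFcont : Continuous FF := by
          apply hc.mul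
          apply Complex.continuous_exp.comp
          apply Continuous.neg
          apply Continuous.mul continuous_const
          apply continuous_finset_sum
          intro i _
          exact continuous_const.mul (Complex.continuous_ofReal.comp (continuous_apply i))
        set e := MeasurableEquiv.piFinSuccAbove (fun _ : Fin (n+1) => ℝ) 0 with hedef
        have he : MeasurePreserving (⇑e) (volume : Measure (Fin (n+1) → ℝ))
            ((volume : Measure ℝ).prod (volume : Measure (Fin n → ℝ))) := by
          have hmp := measurePreserving_piFinSuccAbove (fun _ : Fin (n+1) => (volume : Measure ℝ)) 0
          rw [volume_pi, volume_pi]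
          exact hmp
        have hesymm : ∀ p : ℝ × (Fin n → ℝ), e.symm p = Fin.cons p.1 p.2 := by
          intro p
          rw [hedef, MeasurableEquiv.piFinSuccAbove_symm_apply, Fin.insertNthEquiv_zero]
          rfl
        have hpre : cube (n+1) = ⇑e ⁻¹' ((Set.Ico (0:ℝ) 1) ×ˢ cube n) := by
          ext x
          rw [cube, Set.mem_preimage]
          have hex : e x = (x 0, fun j => x ((0 : Fin (n+1)).succAbove j)) := by
            rw [hedef, MeasurableEquiv.piFinSuccAbove_apply]
            rfl
          rw [hex, Set.mem_prod]
          simp only [Set.mem_pi, Set.mem_univ, forall_true_left, cube, Fin.zero_succAbove]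
          exact Fin.forall_fin_succ
        set G : ℝ × (Fin n → ℝ) → ℂ := fun p => FF (Fin.cons p.1 p.2) with hGdef
        have hGcont : Continuous G := hFFcont.comp continuous_cons
        have hGint : IntegrableOn G ((Set.Ico (0:ℝ) 1) ×ˢ cube n)
            ((volume : Measure ℝ).prod (volume : Measure (Fin n → ℝ))) := by
          apply (hGcont.continuousOn.integrableOn_compact
            ((isCompact_Icc (a := (0:ℝ)) (b := 1)).prod (isCompact_Icc_cube n))).mono_set
          exact Set.prod_mono Set.Ico_subset_Icc_self (cube_subset_Icc n)
        have hfull := h0 (Fin.cons m₀ m)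
        rw [show (∫ x in cube (n+1),
            h x * Complex.exp (-(2 * π * Complex.I
              * ∑ i, ((Fin.cons m₀ m : Fin (n+1) → ℤ) i : ℂ) * (x i : ℂ))))
            = ∫ x in cube (n+1), FF x from rfl] at hfull
        rw [hpre] at hfull
        have hstep1 : ∫ x in ⇑e ⁻¹' ((Set.Ico (0:ℝ) 1) ×ˢ cube n), FF x
            = ∫ p in (Set.Ico (0:ℝ) 1) ×ˢ cube n, G p
              ∂((volume : Measure ℝ).prod (volume : Measure (Fin n → ℝ))) := by
          rw [← he.setIntegral_preimage_emb e.measurableEmbedding G]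
          apply setIntegral_congr_fun
          · exact e.measurable (((measurableSet_Ico).prod
              (MeasurableSet.univ_pi fun _ => measurableSet_Ico)))
          · intro x _
            rw [hGdef]
            simp only
            rw [← hesymm (e x), e.symm_apply_apply]
        rw [hstep1] at hfull
        rw [setIntegral_prod G hGint] at hfull
        -- swap the order of integration
        have hswap : ∫ t in Set.Ico (0:ℝ) 1, ∫ y in cube n, G (t, y) ∂volume ∂volume
            = ∫ y in cube n, ∫ t in Set.Ico (0:ℝ) 1, G (t, y) ∂volume ∂volume := by
          apply integral_integral_swap
          rw [Measure.prod_restrict]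
          exact hGint
        rw [hswap] at hfull
        rw [← hfull]
        apply setIntegral_congr_fun (MeasurableSet.univ_pi fun _ => measurableSet_Ico)
        intro y _
        show Hm m₀ y * Complex.exp (-(2 * π * Complex.I * ∑ i, (m i : ℂ) * ((y i : ℝ) : ℂ)))
          = ∫ t in Set.Ico (0:ℝ) 1, G (t, y)
        have hinner : ∀ t : ℝ, G (t, y)
            = (h (Fin.cons t y) * Complex.exp (-(2 * π * Complex.I * (m₀:ℂ) * (t:ℂ))))
              * Complex.exp (-(2 * π * Complex.I * ∑ i, (m i : ℂ) * (y i : ℂ))) := by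
          intro t
          rw [hGdef]
          simp only [hFFdef]
          have hsum : ∑ i, ((Fin.cons m₀ m : Fin (n+1) → ℤ) i : ℂ)
              * (((Fin.cons t y : Fin (n+1) → ℝ) i : ℝ) : ℂ)
              = (m₀:ℂ) * (t:ℂ) + ∑ i, (m i : ℂ) * ((y i : ℝ) : ℂ) := by
            rw [Fin.sum_univ_succ]
            simp only [Fin.cons_zero, Fin.cons_succ]
          rw [hsum, show -(2 * ↑π * Complex.I * ((m₀:ℂ) * (t:ℂ) + ∑ i, (m i : ℂ) * ((y i : ℝ) : ℂ)))
              = (-(2 * ↑π * Complex.I * (m₀:ℂ) * (t:ℂ)))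
                + (-(2 * ↑π * Complex.I * ∑ i, (m i : ℂ) * ((y i : ℝ) : ℂ))) by ring]
          rw [Complex.exp_add]
          ring
        rw [integral_congr_ae (Filter.Eventually.of_forall hinner)]
        rw [integral_mul_const]
      -- apply the induction hypothesis: Hm m₀ vanishes identically
      have hHm0 : ∀ (m₀ : ℤ) (y : Fin n → ℝ), Hm m₀ y = 0 := by
        intro m₀
        exact IH (Hm m₀) (hHmc m₀) (fun y k => hHmper m₀ y k) (hcoeffH m₀)
      -- now apply the 1-D result for each fixed y
      intro x
      have h1d : ∀ t : ℝ, h (Fin.cons t (Fin.tail x)) = 0 := by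
        apply oneD
        · exact hc.comp (continuous_cons.comp (continuous_id.prodMk continuous_const))
        · intro t
          show h (Fin.cons (t + 1) (Fin.tail x)) = h (Fin.cons t (Fin.tail x))
          rw [← cons_one_shift]
          exact hper _ _
        · intro m
          have h2 := hHm0 m (Fin.tail x)
          rw [hHmdef] at h2
          simp only at h2
          rw [intervalIntegral.integral_of_le zero_le_one]
          rw [← h2]
          apply setIntegral_congr_set
          exact (MeasureTheory.Ico_ae_eq_Ioc).symm
      have h3 := h1d (x 0)
      rwa [Fin.cons_self_tail] at h3
end MultiD

section Poisson

lemma ecoe_neg (t : ℝ) :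
    ((𝐞 (-t) : Circle) : ℂ) = Complex.exp (-(2 * π * Complex.I * (t : ℂ))) := by
  rw [ecoe]
  congr 1
  push_cast
  ring

/-- Poisson summation for the standard integer lattice in Euclidean space. -/
theorem poisson_std (g : SchwartzMap (Vn n) ℂ) :
    ∑' k : Fin n → ℤ, g (intVec k) = ∑' m : Fin n → ℤ, 𝓕 ⇑g (intVec m) := by
  classical
  set h : Vn n → ℂ := fun x => per g x - Qf g x with hhdef
  have hhcont : Continuous h := (per_continuous g).sub (Qf_continuous g)
  -- coefficients of h all vanish
  have hcoeff : ∀ m : Fin n → ℤ,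
      ∫ x in Dstd n, ((𝐞 (-(⟪x, intVec m⟫)) : Circle) : ℂ) * h x = 0 := by
    intro m
    have hint1 : IntegrableOn (fun x => ((𝐞 (-(⟪x, intVec m⟫)) : Circle) : ℂ) * per g x)
        (Dstd n) := integrableOn_of_continuous ((contE m).mul (per_continuous g)) (Dstd_bounded n)
    have hint2 : IntegrableOn (fun x => ((𝐞 (-(⟪x, intVec m⟫)) : Circle) : ℂ) * Qf g x)
        (Dstd n) := integrableOn_of_continuous ((contE m).mul (Qf_continuous g)) (Dstd_bounded n)
    have heq : ∀ x : Vn n, ((𝐞 (-(⟪x, intVec m⟫)) : Circle) : ℂ) * h x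
        = ((𝐞 (-(⟪x, intVec m⟫)) : Circle) : ℂ) * per g x
          - ((𝐞 (-(⟪x, intVec m⟫)) : Circle) : ℂ) * Qf g x := by
      intro x
      rw [hhdef]
      ring
    rw [setIntegral_congr_fun (Dstd_measurableSet n) (fun x _ => heq x)]
    rw [integral_sub hint1 hint2, coeff_per, coeff_Qf, sub_self]
  -- transfer to the cube picture
  set me := (MeasurableEquiv.toLp 2 (Fin n → ℝ)).symm with hmedef
  set hW : (Fin n → ℝ) → ℂ := fun w => h (me.symm w) with hWdef
  have hsymm_me : ∀ y : Vn n, me.symm (me y) = y := fun y => me.symm_apply_apply y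
  have hme_coord : ∀ (y : Vn n) (i : Fin n), (me y) i = y i := fun _ _ => rfl
  have hsymm_coord : ∀ (w : Fin n → ℝ) (i : Fin n), (me.symm w) i = w i := fun _ _ => rfl
  have hWcont : Continuous hW :=
    hhcont.comp (EuclideanSpace.equiv (Fin n) ℝ).symm.continuous
  have hWper : ∀ (w : Fin n → ℝ) (k : Fin n → ℤ), hW (w + fun i => (k i : ℝ)) = hW w := by
    intro w k
    rw [hWdef]
    simp only
    have h1 : me.symm (w + fun i => ((k i : ℤ) : ℝ)) = me.symm w + intVec k := rfl
    rw [h1, hhdef]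
    simp only
    rw [per_periodic, Qf_periodic]
  have hWcoeff : ∀ m : Fin n → ℤ, ∫ w in cube n,
      hW w * Complex.exp (-(2 * π * Complex.I * ∑ i, (m i : ℂ) * (w i : ℂ))) = 0 := by
    intro m
    have hDpre : Dstd n = ⇑me ⁻¹' cube n := by
      ext y
      rw [mem_Dstd]
      constructor
      · intro hy
        intro i _
        exact hy i
      · intro hy i
        exact hy i (Set.mem_univ i)
    have h2 := (EuclideanSpace.volume_preserving_symm_measurableEquiv_toLp (Fin n)).setIntegral_preimage_emb
      me.measurableEmbedding
      (fun w => hW w * Complex.exp (-(2 * π * Complex.I * ∑ i, (m i : ℂ) * (w i : ℂ)))) (cube n)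
    rw [← h2, ← hDpre]
    have h3 : ∀ y : Vn n,
        hW (me y) * Complex.exp (-(2 * π * Complex.I * ∑ i, (m i : ℂ) * ((me y i : ℝ) : ℂ)))
        = ((𝐞 (-(⟪y, intVec m⟫)) : Circle) : ℂ) * h y := by
      intro y
      rw [hWdef]
      simp only
      rw [hsymm_me, ecoe_neg, mul_comm]
      have h4 : ((⟪y, intVec m⟫ : ℝ) : ℂ) = ∑ i, (m i : ℂ) * ((me y i : ℝ) : ℂ) := by
        rw [inner_intVec]
        push_cast
        apply Finset.sum_congr rfl
        intro i _
        rw [mul_comm]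
        rfl
      rw [h4]
    rw [setIntegral_congr_fun (Dstd_measurableSet n) (fun y _ => h3 y), hcoeff m]
  have hW0 := multiD n hW hWcont hWper hWcoeff
  have hzero : per g 0 = Qf g 0 := by
    have h5 := hW0 (me 0)
    rw [hWdef] at h5
    simp only at h5
    rw [hsymm_me] at h5
    rw [hhdef] at h5
    simp only at h5
    exact sub_eq_zero.1 h5
  have hper0 : per g 0 = ∑' k : Fin n → ℤ, g (intVec k) := by
    rw [per]
    apply tsum_congr
    intro k
    rw [zero_add]
  have hQf0 : Qf g 0 = ∑' m : Fin n → ℤ, 𝓕 ⇑g (intVec m) := by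
    rw [Qf]
    apply tsum_congr
    intro m
    rw [charF, inner_zero_left]
    rw [Complex.ofReal_zero, mul_zero, Complex.exp_zero, mul_one]
  rw [← hper0, ← hQf0, hzero]

end Poisson

section ChangeOfVariables

lemma fourier_change (f : SchwartzMap (Vn n) ℂ) (T : Vn n ≃L[ℝ] Vn n) (ξ : Vn n) :
    𝓕 (fun x => f (T x)) ξ
      = |LinearMap.det ((T.toLinearEquiv : Vn n →ₗ[ℝ] Vn n))|⁻¹
        • 𝓕 ⇑f ((ContinuousLinearMap.adjoint ((T.symm : Vn n →L[ℝ] Vn n))) ξ) := by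
  set Tl : Vn n →ₗ[ℝ] Vn n := (T.toLinearEquiv : Vn n →ₗ[ℝ] Vn n) with hTl
  have hdet0 : LinearMap.det Tl ≠ 0 := by
    rw [hTl, ← LinearEquiv.coe_det]
    exact Units.ne_zero _
  set S := ContinuousLinearMap.adjoint ((T.symm : Vn n →L[ℝ] Vn n)) with hS
  set G : Vn n → ℂ := fun y => 𝐞 (-(⟪y, S ξ⟫)) • f y with hG
  have h1 : ∀ x : Vn n, 𝐞 (-(⟪x, ξ⟫)) • f (T x) = G (T x) := by
    intro x
    rw [hG]
    simp only
    congr 2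
    rw [hS, ContinuousLinearMap.adjoint_inner_right]
    rw [show ((T.symm : Vn n →L[ℝ] Vn n)) (T x) = x from T.symm_apply_apply x]
  rw [Real.fourier_eq]
  rw [integral_congr_ae (Filter.Eventually.of_forall h1)]
  have hmap : Measure.map (⇑T) volume = ENNReal.ofReal |(LinearMap.det Tl)⁻¹| • volume := by
    have := Measure.map_linearMap_addHaar_eq_smul_addHaar (μ := volume) hdet0
    rw [show ⇑Tl = ⇑T from rfl] at this
    exact this
  have h2 : ∫ x, G (T x) ∂volume = ∫ y, G y ∂(Measure.map (⇑T) volume) := by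
    have h3 := MeasureTheory.integral_map_equiv (μ := volume) (T.toHomeomorph.toMeasurableEquiv) G
    rw [show ⇑(T.toHomeomorph.toMeasurableEquiv) = ⇑T from rfl] at h3
    exact h3.symm
  rw [h2, hmap, integral_smul_measure]
  rw [Real.fourier_eq]
  rw [ENNReal.toReal_ofReal (abs_nonneg _), abs_inv]

end ChangeOfVariables

end CohnElkies

open CohnElkies in
/-- **Cohn–Elkies bound for lattices.** If `f` is a real-valued Schwartz function with
real-valued Fourier transform, `f ≤ 0` outside the ball of radius `ℓ`, `𝓕 f ≥ 0` everywhere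
and `𝓕 f 0 > 0`, then any full-rank lattice `L ⊆ ℝⁿ` whose nonzero vectors have length at
least `ℓ` satisfies `1 / covol L ≤ f 0 / 𝓕 f 0`. -/
theorem cohn_elkies_lattice_bound (n : ℕ) (ℓ : ℝ)
    (f : SchwartzMap (EuclideanSpace ℝ (Fin n)) ℂ)
    (hf_real : ∀ x, (f x).im = 0)
    (hFf_real : ∀ ξ, (𝓕 (f : EuclideanSpace ℝ (Fin n) → ℂ) ξ).im = 0)
    (hf_neg : ∀ x : EuclideanSpace ℝ (Fin n), ℓ ≤ ‖x‖ → (f x).re ≤ 0)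
    (hFf_nonneg : ∀ ξ, 0 ≤ (𝓕 (f : EuclideanSpace ℝ (Fin n) → ℂ) ξ).re)
    (hFf0 : 0 < (𝓕 (f : EuclideanSpace ℝ (Fin n) → ℂ) 0).re)
    (L : Submodule ℤ (EuclideanSpace ℝ (Fin n)))
    [DiscreteTopology L] [IsZLattice ℝ L]
    (hshort : ∀ v ∈ L, v ≠ 0 → ℓ ≤ ‖v‖) :
    1 / ZLattice.covolume L ≤ (f 0).re / (𝓕 (f : EuclideanSpace ℝ (Fin n) → ℂ) 0).re := by
  classical
  haveI := ZLattice.module_free ℝ L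
  haveI := ZLattice.module_finite ℝ L
  have hcard : Fintype.card (Module.Free.ChooseBasisIndex ℤ ↥L) = n := by
    rw [← Module.finrank_eq_card_chooseBasisIndex, ZLattice.rank ℝ L, finrank_euclideanSpace_fin]
  set b : Module.Basis (Fin n) ℤ ↥L :=
    (Module.Free.chooseBasis ℤ ↥L).reindex (Fintype.equivFinOfCardEq hcard) with hb
  set bR : Module.Basis (Fin n) ℝ (Vn n) := Module.Basis.ofZLatticeBasis ℝ L b with hbR
  set T : Vn n ≃L[ℝ] Vn n :=
    (PiLp.continuousLinearEquiv 2 ℝ (fun _ : Fin n => ℝ)).trans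
      (bR.equivFun.symm.toContinuousLinearEquiv) with hT
  -- values of T on the integer lattice
  have hTint : ∀ k : Fin n → ℤ, T (intVec k) = ∑ i, k i • (bR i : Vn n) := by
    intro k
    show bR.equivFun.symm _ = _
    rw [Module.Basis.equivFun_symm_apply]
    apply Finset.sum_congr rfl
    intro i _
    rw [← Int.cast_smul_eq_zsmul ℝ]
    rfl
  have hmem : ∀ k : Fin n → ℤ, T (intVec k) ∈ L := by
    intro k
    rw [hTint]
    rw [← Module.Basis.ofZLatticeBasis_span ℝ L b]
    exact Submodule.sum_mem _ fun i _ =>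
      Submodule.smul_mem _ _ (Submodule.subset_span (Set.mem_range_self i))
  have hne : ∀ k : Fin n → ℤ, k ≠ 0 → T (intVec k) ≠ 0 := by
    intro k hk h0
    apply hk
    have h1 : intVec k = 0 := by
      have := T.injective (by rw [h0, map_zero] : T (intVec k) = T 0)
      exact this
    funext i
    have h2 := congrArg (fun v : Vn n => v i) h1
    simpa using h2
  -- covolume equals |det T|
  have hrepr : ∀ (x : Vn n) (i : Fin n), bR.repr x i = T.symm x i := by
    intro x i
    show bR.repr x i = bR.equivFun x i
    rw [Module.Basis.equivFun_apply]
  have himg : ZSpan.fundamentalDomain bR = ⇑T '' (Dstd n) := by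
    ext x
    rw [ZSpan.mem_fundamentalDomain]
    constructor
    · intro hx
      refine ⟨T.symm x, (mem_Dstd n _).2 fun i => ?_, T.apply_symm_apply x⟩
      rw [← hrepr]
      exact hx i
    · rintro ⟨w, hw, rfl⟩
      intro i
      rw [hrepr, T.symm_apply_apply]
      exact (mem_Dstd n w).1 hw i
  set dT : ℝ := LinearMap.det ((T.toLinearEquiv : Vn n →ₗ[ℝ] Vn n)) with hdT
  have hcov : ZLattice.covolume L = |dT| := by
    rw [ZLattice.covolume_eq_measure_fundamentalDomain L volume
      (ZLattice.isAddFundamentalDomain b volume), himg]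
    have h3 := Measure.addHaar_image_linearMap volume
      ((T.toLinearEquiv : Vn n →ₗ[ℝ] Vn n)) (Dstd n)
    rw [show ⇑((T.toLinearEquiv : Vn n →ₗ[ℝ] Vn n)) = ⇑T from rfl] at h3
    rw [measureReal_def, h3, vol_Dstd, mul_one, ENNReal.toReal_ofReal (abs_nonneg _)]
  have hcovpos : 0 < ZLattice.covolume L := ZLattice.covolume_pos L volume
  have hdTpos : 0 < |dT| := hcov ▸ hcovpos
  -- the transported Schwartz function
  set g : SchwartzMap (Vn n) ℂ := SchwartzMap.compCLMOfContinuousLinearEquiv ℝ T f with hg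
  have hgcoe : ∀ x, g x = f (T x) := fun x => rfl
  set S := ContinuousLinearMap.adjoint ((T.symm : Vn n →L[ℝ] Vn n)) with hS
  have hFg : ∀ ξ, 𝓕 ⇑g ξ = |dT|⁻¹ • 𝓕 ⇑f (S ξ) := by
    intro ξ
    have h4 : ⇑g = fun x => f (T x) := rfl
    rw [h4]
    exact fourier_change f T ξ
  have hFg_re : ∀ ξ, (𝓕 ⇑g ξ).re = |dT|⁻¹ * (𝓕 ⇑f (S ξ)).re := by
    intro ξ
    rw [hFg ξ, Complex.smul_re]
    rfl
  have hFg_nonneg : ∀ ξ, 0 ≤ (𝓕 ⇑g ξ).re := by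
    intro ξ
    rw [hFg_re]
    exact mul_nonneg (by positivity) (hFf_nonneg _)
  -- summability
  have hsum1 : Summable fun m : Fin n → ℤ => 𝓕 ⇑g (intVec m) := summable_F g
  have hsum2 : Summable fun k : Fin n → ℤ => g (intVec k) := by
    have := summable_shift g 0
    apply this.congr
    intro k
    rw [zero_add]
  have hsum1re : Summable fun m : Fin n → ℤ => (𝓕 ⇑g (intVec m)).re :=
    hsum1.map Complex.reCLM Complex.continuous_re
  have hsum2re : Summable fun k : Fin n → ℤ => (g (intVec k)).re :=
    hsum2.map Complex.reCLM Complex.continuous_re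
  -- the key chain of inequalities
  have key : (𝓕 ⇑f 0).re / ZLattice.covolume L ≤ (f 0).re := by
    have e1 : (𝓕 ⇑f 0).re / ZLattice.covolume L = (𝓕 ⇑g 0).re := by
      rw [hFg_re, hcov, show S 0 = 0 from map_zero S, div_eq_inv_mul]
    have e2 : (𝓕 ⇑g 0).re ≤ ∑' m : Fin n → ℤ, (𝓕 ⇑g (intVec m)).re := by
      have h5 := Summable.le_tsum hsum1re 0 (fun m _ => hFg_nonneg _)
      rwa [intVec_zero] at h5
    have e3a : (∑' m : Fin n → ℤ, 𝓕 ⇑g (intVec m)).re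
        = ∑' m : Fin n → ℤ, (𝓕 ⇑g (intVec m)).re := Complex.reCLM.map_tsum hsum1
    have e3b : (∑' k : Fin n → ℤ, g (intVec k)).re
        = ∑' k : Fin n → ℤ, (g (intVec k)).re := Complex.reCLM.map_tsum hsum2
    have e3 : ∑' m : Fin n → ℤ, (𝓕 ⇑g (intVec m)).re
        = ∑' k : Fin n → ℤ, (g (intVec k)).re := by
      rw [← e3a, ← e3b, ← poisson_std g]
    have e4 : ∑' k : Fin n → ℤ, (g (intVec k)).re ≤ (g 0).re := by
      rw [Summable.tsum_eq_add_tsum_ite hsum2re 0, intVec_zero]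
      have h6 : ∑' k : Fin n → ℤ, (if k = 0 then 0 else (g (intVec k)).re) ≤ 0 := by
        apply tsum_nonpos
        intro k
        by_cases hk : k = 0
        · rw [if_pos hk]
        · rw [if_neg hk]
          rw [hgcoe]
          exact hf_neg _ (hshort _ (hmem k) (hne k hk))
      linarith
    have e5 : (g 0).re = (f 0).re := by
      rw [hgcoe, map_zero]
    linarith
  have hA : (0:ℝ) < (𝓕 ⇑f 0).re := hFf0
  have h7 : 1 / ZLattice.covolume L = ((𝓕 ⇑f 0).re / ZLattice.covolume L) / (𝓕 ⇑f 0).re := by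
    field_simp
  rw [h7]
  exact (div_le_div_iff_of_pos_right hA).2 key
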